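/- Let v_1, v_2 ∈ ℝ^d, d_1, d_2 ∈ ℝ, and let p > 0, q > 0 with v_3 = p·v_1 + q·v_2 and d_3 > p·d_1 + q·d_2. Set r = 1/(d_3 − p·d_1 − q·d_2), u_1 = p·r·v_1, u_2 = q·r·v_2, b_1 = p·r·d_1 + 1, b_2 = q·r·d_2 + 1. Then for every x ∈ ℝ^d, sgn(2 + sgn(v_1·x + d_1) + sgn(v_2·x + d_2) + sgn(v_3·x + d_3)) = sgn(−1 + max(0, u_1·x + b_1) + max(0, u_2·x + b_2)); i.e., the disjunction of three threshold units whose weight vectors are linearly dependent (but whose biases are not in the corresponding relation) is computed exactly by a two-layer rectifier network with two hidden units. -/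

import Mathlib

/-- `sgn x = 1` if `x ≥ 0`, and `-1` otherwise. -/
noncomputable def sgn (x : ℝ) : ℝ := if 0 ≤ x then 1 else -1

lemma sgn_congr (x y : ℝ) (h : 0 ≤ x ↔ 0 ≤ y) : sgn x = sgn y := by
  unfold sgn
  by_cases hx : 0 ≤ x
  · rw [if_pos hx, if_pos (h.mp hx)]
  · rw [if_neg hx, if_neg (fun hy => hx (h.mpr hy))]

/-- the disjunction of three threshold units with linearly
dependent weight vectors (but bias not in the corresponding relation) is
computed exactly by a two-layer rectifier network with two hidden units. -/
theorem three_thresholds_as_two_relus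
    (dim : ℕ) (v1 v2 v3 : Fin dim → ℝ) (d1 d2 d3 : ℝ) (p q : ℝ)
    (hp : 0 < p) (hq : 0 < q)
    (hv : v3 = fun i => p * v1 i + q * v2 i)
    (hd : p * d1 + q * d2 < d3)
    (r : ℝ) (hr : r = 1 / (d3 - p * d1 - q * d2))
    (u1 u2 : Fin dim → ℝ) (b1 b2 : ℝ)
    (hu1 : u1 = fun i => p * r * v1 i) (hu2 : u2 = fun i => q * r * v2 i)
    (hb1 : b1 = p * r * d1 + 1) (hb2 : b2 = q * r * d2 + 1) :
    ∀ x : Fin dim → ℝ,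
      sgn (2 + sgn ((∑ i, v1 i * x i) + d1) + sgn ((∑ i, v2 i * x i) + d2)
             + sgn ((∑ i, v3 i * x i) + d3)) =
      sgn (-1 + max 0 ((∑ i, u1 i * x i) + b1) + max 0 ((∑ i, u2 i * x i) + b2)) := by
  intro x
  have hs : 0 < d3 - p * d1 - q * d2 := by linarith
  have hrpos : 0 < r := by rw [hr]; positivity
  have hrs : r * (d3 - p * d1 - q * d2) = 1 := by
    rw [hr]; field_simp
  set A := (∑ i, v1 i * x i) + d1 with hA
  set B := (∑ i, v2 i * x i) + d2 with hB
  have h3 : (∑ i, v3 i * x i) + d3 = p * A + q * B + (d3 - p * d1 - q * d2) := by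
    simp only [hv, hA, hB]
    rw [show (∑ i, (p * v1 i + q * v2 i) * x i)
        = p * (∑ i, v1 i * x i) + q * (∑ i, v2 i * x i) by
      rw [Finset.mul_sum, Finset.mul_sum, ← Finset.sum_add_distrib]
      exact Finset.sum_congr rfl fun i _ => by ring]
    ring
  have hU1 : (∑ i, u1 i * x i) + b1 = p * r * A + 1 := by
    simp only [hu1, hb1, hA]
    rw [show (∑ i, p * r * v1 i * x i) = p * r * (∑ i, v1 i * x i) by
      rw [Finset.mul_sum]; exact Finset.sum_congr rfl fun i _ => by ring]
    ring
  have hU2 : (∑ i, u2 i * x i) + b2 = q * r * B + 1 := by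
    simp only [hu2, hb2, hB]
    rw [show (∑ i, q * r * v2 i * x i) = q * r * (∑ i, v2 i * x i) by
      rw [Finset.mul_sum]; exact Finset.sum_congr rfl fun i _ => by ring]
    ring
  rw [h3, hU1, hU2]
  set C := p * A + q * B + (d3 - p * d1 - q * d2) with hC
  have hL : (0 ≤ 2 + sgn A + sgn B + sgn C) ↔ (0 ≤ A ∨ 0 ≤ B ∨ 0 ≤ C) := by
    unfold sgn
    split_ifs with h1 h2 h3' <;> simp -failIfUnchanged only [not_le] at * <;> norm_num <;> tauto
  have hR : (0 ≤ -1 + max 0 (p * r * A + 1) + max 0 (q * r * B + 1))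
      ↔ (0 ≤ A ∨ 0 ≤ B ∨ 0 ≤ C) := by
    constructor
    · intro h
      by_contra hcon
      push_neg at hcon
      obtain ⟨ha, hb, hc⟩ := hcon
      rw [hC] at hc
      have h1 : p * r * A + q * r * B + 1 < 0 := by
        nlinarith [mul_neg_of_pos_of_neg hrpos hc]
      rcases le_or_gt (p * r * A + 1) 0 with hm1 | hm1 <;>
        rcases le_or_gt (q * r * B + 1) 0 with hm2 | hm2
      · rw [max_eq_left hm1, max_eq_left hm2] at h; linarith
      · rw [max_eq_left hm1, max_eq_right hm2.le] at h
        have := mul_neg_of_pos_of_neg (mul_pos hq hrpos) hb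
        linarith
      · rw [max_eq_right hm1.le, max_eq_left hm2] at h
        have := mul_neg_of_pos_of_neg (mul_pos hp hrpos) ha
        linarith
      · rw [max_eq_right hm1.le, max_eq_right hm2.le] at h; linarith
    · rintro (h | h | h)
      · nlinarith [le_max_right (0:ℝ) (p * r * A + 1), le_max_left (0:ℝ) (q * r * B + 1),
          mul_nonneg (mul_pos hp hrpos).le h]
      · nlinarith [le_max_left (0:ℝ) (p * r * A + 1), le_max_right (0:ℝ) (q * r * B + 1),
          mul_nonneg (mul_pos hq hrpos).le h]
      · rw [hC] at h
        have h1 : 0 ≤ p * r * A + q * r * B + 1 := by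
          nlinarith [mul_nonneg hrpos.le h]
        nlinarith [le_max_right (0:ℝ) (p * r * A + 1), le_max_right (0:ℝ) (q * r * B + 1),
          le_max_left (0:ℝ) (p * r * A + 1), le_max_left (0:ℝ) (q * r * B + 1)]
  exact sgn_congr _ _ (hL.trans hR.symm)
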